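/- For m ≥ 1 let F_m(x) be the formal power series whose coefficient of x^N is the sum, over compositions of N with last part equal to m, of the product ∏(π_i + π_{i+1} − 1). Then F_m satisfies F_m(x) = x^m + x^m ∑_{l ≥ 1} (l + m − 1) F_l(x). -/

import Mathlib

open PowerSeries

/-- Sliding-product weight `∏_{i=1}^{k-1} (π_i + π_{i+1} - 1)`. -/
def slidingWeight (l : List ℕ) : ℕ :=
  ((l.zip l.tail).map fun p => p.1 + p.2 - 1).prod

/-- `F m`: the power series whose coefficient of `xᴺ` is the sum of the
sliding weight over compositions of `N` whose last part equals `m`. -/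
noncomputable def F (m : ℕ) : ℚ⟦X⟧ :=
  PowerSeries.mk fun N =>
    ((∑ c : Composition N,
        if c.blocks.getLast? = some m then slidingWeight c.blocks else 0 : ℕ) : ℚ)

/-- The natural-number coefficient. -/
def g (N m : ℕ) : ℕ :=
  ∑ c : Composition N, if c.blocks.getLast? = some m then slidingWeight c.blocks else 0

lemma coeff_F (m N : ℕ) : (PowerSeries.coeff (R := ℚ) N) (F m) = (g N m : ℚ) := by
  simp [F, g, coeff_mk]

lemma mem_of_getLast?' {l : List ℕ} {m : ℕ} (h : l.getLast? = some m) : m ∈ l := by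
  rcases l.eq_nil_or_concat with rfl | ⟨t, a, rfl⟩
  · simp at h
  · rw [List.concat_eq_append, List.getLast?_concat] at h
    simp_all

lemma eq_concat_of_getLast? {l : List ℕ} {m : ℕ} (h : l.getLast? = some m) :
    l = l.dropLast ++ [m] := by
  rcases l.eq_nil_or_concat with rfl | ⟨t, a, rfl⟩
  · simp at h
  · rw [List.concat_eq_append, List.getLast?_concat] at h
    simp_all

lemma slidingWeight_singleton (a : ℕ) : slidingWeight [a] = 1 := by
  simp [slidingWeight]

lemma slidingWeight_cons_cons (a b : ℕ) (t : List ℕ) :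
    slidingWeight (a :: b :: t) = (a + b - 1) * slidingWeight (b :: t) := by
  simp [slidingWeight]

lemma slidingWeight_append (l : List ℕ) (hl : l ≠ []) (m : ℕ) :
    slidingWeight (l ++ [m]) = (l.getLast hl + m - 1) * slidingWeight l := by
  induction l with
  | nil => simp at hl
  | cons a t ih =>
    cases t with
    | nil => simp [slidingWeight_singleton, slidingWeight_cons_cons]
    | cons b s =>
      have hbs : (b :: s : List ℕ) ≠ [] := by simp
      simp only [List.cons_append] at *
      rw [slidingWeight_cons_cons, ih hbs, slidingWeight_cons_cons,
        List.getLast_cons hbs]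
      ring

lemma g_eq_zero (n l : ℕ) (h : n < l) : g n l = 0 := by
  apply Finset.sum_eq_zero
  intro c _
  rw [if_neg]
  intro hc
  have hmem := mem_of_getLast?' hc
  have := List.single_le_sum (l := c.blocks) (fun x _ => Nat.zero_le x) l hmem
  rw [c.blocks_sum] at this
  omega

lemma blocks_ne_nil {n : ℕ} (hn : 1 ≤ n) (c : Composition n) : c.blocks ≠ [] := by
  intro h
  have := c.blocks_sum
  rw [h] at this
  simp at this
  omega

/-- Append a block `m` to a composition of `n`. -/
def concatComp {n : ℕ} (m : ℕ) (hm : 1 ≤ m) (c : Composition n) : Composition (n + m) where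
  blocks := c.blocks ++ [m]
  blocks_pos := by
    intro i hi
    rcases List.mem_append.1 hi with h1 | h2
    · exact c.blocks_pos h1
    · simp at h2; omega
  blocks_sum := by rw [List.sum_append, c.blocks_sum]; simp

/-- Remove the last block `m` from a composition of `n + m`. -/
def dropLastComp {n m : ℕ} (c : Composition (n + m))
    (hc : c.blocks.getLast? = some m) : Composition n where
  blocks := c.blocks.dropLast
  blocks_pos := fun hi => c.blocks_pos ((List.dropLast_sublist _).subset hi)
  blocks_sum := by
    have hs := c.blocks_sum
    conv_lhs at hs => rw [eq_concat_of_getLast? hc]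
    rw [List.sum_append] at hs
    simp at hs
    omega

lemma getLast_mem_Icc {n : ℕ} (hn : 1 ≤ n) (c : Composition n) :
    c.blocks.getLast (blocks_ne_nil hn c) ∈ Finset.Icc 1 n := by
  have hmem := List.getLast_mem (blocks_ne_nil hn c)
  have h1 := c.blocks_pos hmem
  have h2 := List.single_le_sum (l := c.blocks) (fun x _ => Nat.zero_le x) _ hmem
  rw [c.blocks_sum] at h2
  exact Finset.mem_Icc.2 ⟨h1, h2⟩

lemma g_rec (m n : ℕ) (hm : 1 ≤ m) (hn : 1 ≤ n) :
    g (n + m) m = ∑ l ∈ Finset.Icc 1 n, (l + m - 1) * g n l := by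
  have step1 : g (n + m) m = ∑ c' : Composition n,
      (c'.blocks.getLast (blocks_ne_nil hn c') + m - 1) * slidingWeight c'.blocks := by
    rw [g, ← Finset.sum_filter]
    refine Finset.sum_bij'
      (i := fun c hc => dropLastComp c (by simpa using hc))
      (j := fun c' _ => concatComp m hm c') ?_ ?_ ?_ ?_ ?_
    · intro a _; exact Finset.mem_univ _
    · intro c' _
      simp only [Finset.mem_filter, Finset.mem_univ, true_and, concatComp]
      exact List.getLast?_concat
    · intro c hc
      simp only [Finset.mem_filter, Finset.mem_univ, true_and] at hc
      apply Composition.ext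
      simp only [concatComp, dropLastComp]
      exact (eq_concat_of_getLast? hc).symm
    · intro c' _
      apply Composition.ext
      simp [concatComp, dropLastComp, List.dropLast_concat]
    · intro c hc
      simp only [Finset.mem_filter, Finset.mem_univ, true_and] at hc
      have hne : c.blocks.dropLast ≠ [] := blocks_ne_nil hn (dropLastComp c hc)
      conv_lhs => rw [eq_concat_of_getLast? hc]
      rw [slidingWeight_append _ hne]
      rfl
  rw [step1]
  have step2 : ∀ c' : Composition n,
      (c'.blocks.getLast (blocks_ne_nil hn c') + m - 1) * slidingWeight c'.blocks
      = ∑ l ∈ Finset.Icc 1 n,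
          if c'.blocks.getLast? = some l then (l + m - 1) * slidingWeight c'.blocks else 0 := by
    intro c'
    rw [Finset.sum_eq_single (c'.blocks.getLast (blocks_ne_nil hn c'))]
    · rw [if_pos (List.getLast?_eq_getLast _)]
    · intro b _ hb
      rw [if_neg]
      rw [List.getLast?_eq_getLast (blocks_ne_nil hn c')]
      simp [Ne.symm hb]
    · intro habs
      exact absurd (getLast_mem_Icc hn c') habs
  simp only [step2]
  rw [Finset.sum_comm]
  apply Finset.sum_congr rfl
  intro l _
  rw [g, Finset.mul_sum]
  apply Finset.sum_congr rfl
  intro c' _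
  split <;> simp

/-- Transfer relation `F_m(x) = x^m + x^m ∑_{l ≥ 1} (l + m − 1) F_l(x)`,
stated coefficientwise (the sum over `l` is coefficientwise finite since
`F_l` has lowest-order term `x^l`, so only `l ≤ N` contribute). -/
theorem transfer_relation (m : ℕ) (hm : 1 ≤ m) (N : ℕ) :
    (PowerSeries.coeff (R := ℚ) N) (F m)
      = (PowerSeries.coeff (R := ℚ) N) (X ^ m)
        + ∑ l ∈ Finset.Icc 1 N,
            ((l + m - 1 : ℕ) : ℚ) * (PowerSeries.coeff (R := ℚ) N) (X ^ m * F l) := by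
  rcases lt_trichotomy N m with h | heq | h
  · -- N < m : everything vanishes
    rw [coeff_F, g_eq_zero _ _ h, PowerSeries.coeff_X_pow, if_neg (by omega)]
    rw [Finset.sum_eq_zero]
    · simp
    intro l _
    have : (PowerSeries.coeff (R := ℚ) N) (X ^ m * F l) = 0 := by
      rw [PowerSeries.coeff_mul, Finset.sum_eq_zero]
      intro p hp
      rw [PowerSeries.coeff_X_pow, if_neg, zero_mul]
      have := Finset.HasAntidiagonal.antidiagonal.fst_le hp
      omega
    rw [this, mul_zero]
  · -- N = m
    subst heq
    rw [coeff_F, PowerSeries.coeff_X_pow, if_pos rfl]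
    have hg : g N N = 1 := by
      rw [g, Finset.sum_eq_single (⟨[N], by intro i hi; simp at hi; omega, by simp⟩ :
        Composition N)]
      · rw [if_pos (by simp), slidingWeight_singleton]
      · intro c _ hc
        rw [if_neg]
        intro hlast
        apply hc
        apply Composition.ext
        have hconcat := eq_concat_of_getLast? hlast
        have hs := c.blocks_sum
        conv_lhs at hs => rw [hconcat]
        rw [List.sum_append] at hs
        simp at hs
        have hnil : c.blocks.dropLast = [] := by
          by_contra hne
          rcases List.exists_mem_of_ne_nil _ hne with ⟨x, hx⟩
          have := c.blocks_pos ((List.dropLast_sublist _).subset hx)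
          have := List.single_le_sum (l := c.blocks.dropLast)
            (fun x _ => Nat.zero_le x) x hx
          omega
        rw [hconcat, hnil]
        simp
      · intro habs
        exact absurd (Finset.mem_univ _) habs
    rw [hg]
    rw [Finset.sum_eq_zero]
    · simp
    intro l hl
    have hc : (PowerSeries.coeff (R := ℚ) N) (X ^ N * F l) = 0 := by
      have h0 := PowerSeries.coeff_X_pow_mul (F l) N 0
      rw [zero_add] at h0
      rw [h0, coeff_F, g_eq_zero 0 l (Finset.mem_Icc.1 hl).1]
      simp
    rw [hc, mul_zero]
  · -- m < N
    have hNm : N - m + m = N := by omega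
    rw [coeff_F, PowerSeries.coeff_X_pow, if_neg (by omega), zero_add]
    have hg : g N m = ∑ l ∈ Finset.Icc 1 (N - m), (l + m - 1) * g (N - m) l := by
      conv_lhs => rw [← hNm]
      exact g_rec m (N - m) hm (by omega)
    rw [hg, Nat.cast_sum]
    have hcoeff : ∀ l, (PowerSeries.coeff (R := ℚ) N) (X ^ m * F l) = (g (N - m) l : ℚ) := by
      intro l
      have h0 := PowerSeries.coeff_X_pow_mul (F l) m (N - m)
      rw [hNm] at h0
      rw [h0, coeff_F]
    have hzero : ∀ l ∈ Finset.Icc 1 N, l ∉ Finset.Icc 1 (N - m) →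
        ((l + m - 1 : ℕ) : ℚ) * (PowerSeries.coeff (R := ℚ) N) (X ^ m * F l) = 0 := by
      intro l hl hl'
      rw [hcoeff, g_eq_zero (N - m) l (by
        simp only [Finset.mem_Icc] at hl hl'
        omega)]
      simp
    rw [← Finset.sum_subset (Finset.Icc_subset_Icc_right (by omega)) hzero]
    apply Finset.sum_congr rfl
    intro l hl
    rw [Nat.cast_mul, hcoeff]
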